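/- Assume the additive-noise utilities of Assumption 1: U i (ω) = (Y i + X ω)⁺ with Y : ι → ℝ deterministic, X : Ω → ℝ a real random variable, and ℙ(∀ i, Y i + X ≥ 0) = 1. Define g(β) = β · max_{i ∈ ι} ℙ(X ≥ c i + β − Y i) and suppose ζ ≥ 0 satisfies g(β) ≤ g(ζ) for all β ≥ 0. Then: (a) with prices p i = c i + ζ, every measurable decision rule d : Ω → Option ι that is user-optimal pointwise for (p, U ω) has expected profit exactly g(ζ); and (b) for every price vector q : ι → ℝ and every measurable decision rule d : Ω → Option ι that is user-optimal pointwise for (q, U ω), the expected profit is at most g(ζ). Hence the pricing p i = c i + ζ maximizes the charging station's expected profit over all price menus. (Paper's Theorem 7.) -/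

import Mathlib

open Finset MeasureTheory

/-- A decision `d` is user-optimal for prices `q` and utilities `u`. -/
def userOptimal {ι : Type*} [Fintype ι] (q u : ι → ℝ) : Option ι → Prop
  | some i => 0 ≤ u i - q i ∧ ∀ j, u j - q j ≤ u i - q i
  | none => ∀ j, u j - q j < 0

/-- Profit of a decision: `q i - c i` if option `i` is accepted, `0` otherwise. -/
def profit {ι : Type*} (q c : ι → ℝ) : Option ι → ℝ
  | some i => q i - c i
  | none => 0

lemma profit_eq_sum {ι : Type*} [Fintype ι] {Ω : Type*} (q c : ι → ℝ)
    (d : Ω → Option ι) (ω : Ω) :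
    profit q c (d ω) = ∑ i : ι, Set.indicator {ω | d ω = some i} (fun _ => q i - c i) ω := by
  cases h : d ω with
  | none =>
    rw [Finset.sum_eq_zero]
    · rfl
    · intro i _
      apply Set.indicator_of_notMem
      simp [Set.mem_setOf_eq, h]
  | some i =>
    rw [Finset.sum_eq_single i]
    · rw [Set.indicator_of_mem (by simpa [Set.mem_setOf_eq] using h)]
      rfl
    · intro j _ hj
      apply Set.indicator_of_notMem
      simp only [Set.mem_setOf_eq, h]
      exact fun hc => hj (Option.some.inj hc).symm
    · intro hi; exact absurd (Finset.mem_univ i) hi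

lemma profit_integrable {ι : Type*} [Fintype ι] {Ω : Type*} [MeasurableSpace Ω]
    (ℙ : Measure Ω) [IsProbabilityMeasure ℙ] (q c : ι → ℝ) (d : Ω → Option ι)
    (hd : ∀ o : Option ι, MeasurableSet {ω | d ω = o}) :
    Integrable (fun ω => profit q c (d ω)) ℙ := by
  have : (fun ω => profit q c (d ω)) =
      fun ω => ∑ i : ι, Set.indicator {ω | d ω = some i} (fun _ => q i - c i) ω := by
    funext ω; exact profit_eq_sum q c d ω
  rw [this]
  exact integrable_finset_sum _ fun i _ =>
    (integrable_const (q i - c i)).indicator (hd (some i))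

/-- Theorem 7 of the paper: under additive-noise utilities `U i = (Y i + X)⁺` with
`ℙ(∀ i, Y i + X ≥ 0) = 1`, let `g β = β · max_i ℙ(X ≥ c i + β - Y i)` and let
`ζ ≥ 0` maximize `g` over `β ≥ 0`. Then (a) the pricing `p i = c i + ζ` has expected
profit exactly `g ζ` for every measurable pointwise user-optimal decision rule; and
(b) any price menu `q` with any measurable pointwise user-optimal decision rule has
expected profit at most `g ζ`. Thus `p i = c i + ζ` maximizes the expected profit. -/
theorem fixed_profit_pricing_optimal {ι : Type*} [Fintype ι] [Nonempty ι]
    {Ω : Type*} [MeasurableSpace Ω] (ℙ : Measure Ω) [IsProbabilityMeasure ℙ]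
    (c Y : ι → ℝ) (X : Ω → ℝ) (hX : Measurable X)
    (U : Ω → ι → ℝ) (hUdef : ∀ ω i, U ω i = max (Y i + X ω) 0)
    (hpos : ℙ {ω | ∀ i, 0 ≤ Y i + X ω} = 1)
    (g : ℝ → ℝ)
    (hg : ∀ β, g β = β * univ.sup' univ_nonempty
      (fun i => (ℙ {ω | c i + β - Y i ≤ X ω}).toReal))
    (ζ : ℝ) (hζ : 0 ≤ ζ) (hζmax : ∀ β, 0 ≤ β → g β ≤ g ζ)
    (p : ι → ℝ) (hp : ∀ i, p i = c i + ζ) :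
    (∀ d : Ω → Option ι, (∀ o : Option ι, MeasurableSet {ω | d ω = o}) →
      (∀ ω, userOptimal p (U ω) (d ω)) →
      (∫ ω, profit p c (d ω) ∂ℙ) = g ζ) ∧
    (∀ q : ι → ℝ, ∀ d : Ω → Option ι, (∀ o : Option ι, MeasurableSet {ω | d ω = o}) →
      (∀ ω, userOptimal q (U ω) (d ω)) →
      (∫ ω, profit q c (d ω) ∂ℙ) ≤ g ζ) := by
  -- the good set where utilities are additive
  have hGmeas : MeasurableSet {ω | ∀ i, 0 ≤ Y i + X ω} := by
    have : {ω | ∀ i, 0 ≤ Y i + X ω} = ⋂ i, {ω | 0 ≤ Y i + X ω} := by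
      ext ω; simp [Set.mem_iInter]
    rw [this]
    exact MeasurableSet.iInter fun i =>
      measurableSet_le measurable_const (measurable_const.add hX)
  have hGae : ∀ᵐ ω ∂ℙ, ∀ i, 0 ≤ Y i + X ω := by
    rw [ae_iff]
    have : {ω | ¬ ∀ i, 0 ≤ Y i + X ω} = {ω | ∀ i, 0 ≤ Y i + X ω}ᶜ := rfl
    rw [this, measure_compl hGmeas (measure_ne_top _ _), hpos]
    simp
  constructor
  · -- Part (a)
    intro d hd hopt
    obtain ⟨i₀, -, hi₀⟩ := Finset.exists_min_image univ (fun i => c i + ζ - Y i)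
      univ_nonempty
    set S : Set Ω := {ω | c i₀ + ζ - Y i₀ ≤ X ω} with hSdef
    have hSm : MeasurableSet S := measurableSet_le measurable_const hX
    have hae : ∀ᵐ ω ∂ℙ, profit p c (d ω) = Set.indicator S (fun _ => ζ) ω := by
      filter_upwards [hGae] with ω hω
      cases h : d ω with
      | none =>
        have hopt' := hopt ω
        rw [h] at hopt'
        have h0 : U ω i₀ - p i₀ < 0 := hopt' i₀
        rw [hUdef ω i₀, max_eq_left (hω i₀), hp i₀] at h0
        have : ω ∉ S := by
          show ¬ (c i₀ + ζ - Y i₀ ≤ X ω); linarith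
        rw [Set.indicator_of_notMem this]
        rfl
      | some i =>
        have hopt' := hopt ω
        rw [h] at hopt'
        obtain ⟨h1, -⟩ := hopt'
        rw [hUdef ω i, max_eq_left (hω i), hp i] at h1
        have : ω ∈ S := by
          show c i₀ + ζ - Y i₀ ≤ X ω
          have := hi₀ i (Finset.mem_univ i)
          linarith
        rw [Set.indicator_of_mem this]
        show p i - c i = ζ
        rw [hp i]; ring
    rw [integral_congr_ae hae, integral_indicator_const _ hSm, hg ζ]
    have hmax : univ.sup' univ_nonempty
        (fun i => (ℙ {ω | c i + ζ - Y i ≤ X ω}).toReal) = (ℙ S).toReal := by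
      apply le_antisymm
      · apply Finset.sup'_le
        intro i _
        apply ENNReal.toReal_mono (measure_ne_top _ _)
        apply measure_mono
        intro ω hω
        show c i₀ + ζ - Y i₀ ≤ X ω
        have hω' : c i + ζ - Y i ≤ X ω := hω
        have := hi₀ i (Finset.mem_univ i)
        linarith
      · rw [hSdef]
        exact Finset.le_sup' (fun i => (ℙ {ω | c i + ζ - Y i ≤ X ω}).toReal)
          (Finset.mem_univ i₀)
    rw [hmax, smul_eq_mul, mul_comm]; rfl
  · -- Part (b)
    intro q d hd hopt
    have hint : Integrable (fun ω => profit q c (d ω)) ℙ :=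
      profit_integrable ℙ q c d hd
    set m : ℝ := univ.sup' univ_nonempty (fun i => Y i - q i) with hm
    obtain ⟨i₁, -, hi₁⟩ := Finset.exists_mem_eq_sup' (univ_nonempty (α := ι))
      (fun i => Y i - q i)
    set A : Finset ι := univ.filter (fun i => Y i - q i = m) with hA
    have hAne : A.Nonempty := ⟨i₁, Finset.mem_filter.mpr ⟨Finset.mem_univ _, hi₁.symm⟩⟩
    set β : ℝ := A.sup' hAne (fun i => q i - c i) with hβ
    obtain ⟨iS, hiSA, hiSβ⟩ := Finset.exists_mem_eq_sup' hAne (fun i => q i - c i)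
    have hiSm : Y iS - q iS = m := (Finset.mem_filter.mp hiSA).2
    set β' : ℝ := max β 0 with hβ'
    have hβ'0 : 0 ≤ β' := le_max_right _ _
    set E : Set Ω := {ω | c iS + β' - Y iS ≤ X ω} with hE
    have hEm : MeasurableSet E := measurableSet_le measurable_const hX
    have haebound : ∀ᵐ ω ∂ℙ, profit q c (d ω) ≤ Set.indicator E (fun _ => β') ω := by
      filter_upwards [hGae] with ω hω
      have hind0 : 0 ≤ Set.indicator E (fun _ => β') ω :=
        Set.indicator_nonneg (fun _ _ => hβ'0) ω
      cases h : d ω with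
      | none => simpa [profit] using hind0
      | some i =>
        have hopt' := hopt ω
        rw [h] at hopt'
        obtain ⟨h1, h2⟩ := hopt'
        have hU : ∀ j, U ω j = Y j + X ω := fun j => by
          rw [hUdef ω j, max_eq_left (hω j)]
        -- i maximizes Y j - q j
        have h2' : ∀ j, Y j - q j ≤ Y i - q i := by
          intro j
          have := h2 j
          rw [hU j, hU i] at this
          linarith
        have hiA : i ∈ A := by
          rw [hA, Finset.mem_filter]
          refine ⟨Finset.mem_univ i, le_antisymm ?_ ?_⟩
          · rw [hm]
            exact Finset.le_sup' (fun j => Y j - q j) (Finset.mem_univ i)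
          · rw [hm]
            exact Finset.sup'_le _ _ fun j _ => h2' j
        have hprofβ : q i - c i ≤ β := by
          rw [hβ]
          exact Finset.le_sup' (fun j => q j - c j) hiA
        show q i - c i ≤ Set.indicator E (fun _ => β') ω
        by_cases hb : 0 ≤ β
        · have hββ' : β' = β := max_eq_left hb
          have hXω : q i - Y i ≤ X ω := by
            have := h1; rw [hU i] at this; linarith
          have hiAm : Y i - q i = m := (Finset.mem_filter.mp hiA).2
          have hiSc : q iS - c iS = β := by
            rw [hβ]
            exact hiSβ.symm
          have hωE : ω ∈ E := by
            show c iS + β' - Y iS ≤ X ω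
            -- c iS + β' - Y iS = -m  and X ω ≥ q i - Y i = -m
            linarith [hXω, hiSm, hiAm, hββ', hiSc]
          rw [Set.indicator_of_mem hωE]
          rw [hββ']; exact hprofβ
        · push_neg at hb
          have : q i - c i < 0 := lt_of_le_of_lt hprofβ hb
          linarith [hind0]
    have hstep : (∫ ω, profit q c (d ω) ∂ℙ) ≤ (ℙ E).toReal • β' :=
      (integral_mono_ae hint ((integrable_const β').indicator hEm) haebound).trans
        (le_of_eq (integral_indicator_const _ hEm))
    have hEsup : (ℙ E).toReal ≤ univ.sup' univ_nonempty
        (fun i => (ℙ {ω | c i + β' - Y i ≤ X ω}).toReal) := by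
      rw [hE]
      exact Finset.le_sup' (fun i => (ℙ {ω | c i + β' - Y i ≤ X ω}).toReal)
        (Finset.mem_univ iS)
    calc (∫ ω, profit q c (d ω) ∂ℙ) ≤ (ℙ E).toReal • β' := hstep
      _ = β' * (ℙ E).toReal := by rw [smul_eq_mul, mul_comm]
      _ ≤ β' * univ.sup' univ_nonempty
          (fun i => (ℙ {ω | c i + β' - Y i ≤ X ω}).toReal) :=
        mul_le_mul_of_nonneg_left hEsup hβ'0
      _ = g β' := (hg β').symm
      _ ≤ g ζ := hζmax β' hβ'0
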